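/- Each of the two conditional means is within 1/2 of the unconditional mean: |μ_even − μ| ≤ 1/2 and |μ_odd − μ| ≤ 1/2. -/

import Mathlib

open MeasureTheory ProbabilityTheory Finset
open scoped Classical

noncomputable def sgnH : ℝ → ℝ := fun x => if x = 1/2 then -1 else 1
noncomputable def phiH : ℝ → ℝ := fun x => x * sgnH x


lemma aux_integral_prod {Ω : Type*} [MeasureSpace Ω] [IsProbabilityMeasure (ℙ : Measure Ω)]
    {ι : Type*} (f : ι → Ω → ℝ) (hm : ∀ i, Measurable (f i))
    (hindep : iIndepFun f ℙ)
    (hint : ∀ i, Integrable (f i) ℙ) (s : Finset ι) :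
    Integrable (∏ i ∈ s, f i) ℙ ∧
      ∫ ω, (∏ i ∈ s, f i) ω ∂ℙ = ∏ i ∈ s, ∫ ω, f i ω ∂ℙ := by
  classical
  induction s using Finset.induction with
  | empty =>
      constructor
      · exact integrable_const (1:ℝ)
      · simp
  | @insert a s ha ih =>
      have hIF : IndepFun (∏ j ∈ s, f j) (f a) ℙ :=
        hindep.indepFun_finsetProd_of_notMem hm ha
      have hInt : Integrable ((∏ j ∈ s, f j) * f a) ℙ := hIF.integrable_mul ih.1 (hint a)
      have hEq : (∏ j ∈ insert a s, f j) = (∏ j ∈ s, f j) * f a := by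
        rw [Finset.prod_insert ha, mul_comm]
      constructor
      · rw [hEq]; exact hInt
      · rw [hEq, Finset.prod_insert ha]
        have := hIF.integral_mul_eq_mul_integral ih.1.aestronglyMeasurable (hint a).aestronglyMeasurable
        rw [show (∫ ω, ((∏ j ∈ s, f j) * f a) ω ∂ℙ) = ∫ ω, ((∏ j ∈ s, f j) ω * f a ω) ∂ℙ from rfl]
        rw [show (∫ ω, ((∏ j ∈ s, f j) ω * f a ω) ∂ℙ) = (∫ ω, (∏ j ∈ s, f j) ω ∂ℙ) * ∫ ω, f a ω ∂ℙ from this]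
        rw [ih.2, mul_comm]

lemma aux_telescope {ι : Type*} [DecidableEq ι] (u : ι → ℝ) (h0 : ∀ i, 0 ≤ u i)
    (h1 : ∀ i, u i ≤ 1) (s : Finset ι) :
    ∑ j ∈ s, (∏ k ∈ s.erase j, u k) * (1 - u j) ≤ 1 - ∏ k ∈ s, u k := by
  induction s using Finset.induction with
  | empty => simp
  | @insert a s ha ih =>
      have hP0 : 0 ≤ ∏ k ∈ s, u k := Finset.prod_nonneg fun i _ => h0 i
      have hP1 : ∏ k ∈ s, u k ≤ 1 := Finset.prod_le_one (fun i _ => h0 i) (fun i _ => h1 i)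
      rw [Finset.sum_insert ha, Finset.prod_insert ha]
      have e1 : (insert a s).erase a = s := Finset.erase_insert ha
      have e2 : ∀ j ∈ s, (insert a s).erase j = insert a (s.erase j) := by
        intro j hj
        rw [Finset.erase_insert_of_ne]
        intro h; exact ha (h ▸ hj)
      have e3 : ∑ j ∈ s, (∏ k ∈ (insert a s).erase j, u k) * (1 - u j)
          = u a * ∑ j ∈ s, (∏ k ∈ s.erase j, u k) * (1 - u j) := by
        rw [Finset.mul_sum]
        refine Finset.sum_congr rfl fun j hj => ?_
        rw [e2 j hj, Finset.prod_insert (fun h => ha (Finset.mem_of_mem_erase h))]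
        ring
      rw [e1, e3]
      have h2 : u a * ∑ j ∈ s, (∏ k ∈ s.erase j, u k) * (1 - u j)
          ≤ u a * (1 - ∏ k ∈ s, u k) := mul_le_mul_of_nonneg_left ih (h0 a)
      nlinarith [h0 a, h1 a]

lemma aux_int_ne_half (m m' : ℤ) : (m:ℝ) ≠ (m':ℝ) + 1/2 := by
  intro h
  have h2 : ((2*m : ℤ):ℝ) = ((2*m' + 1 : ℤ):ℝ) := by push_cast; linarith
  have h3 : (2*m : ℤ) = 2*m' + 1 := by exact_mod_cast h2
  omega

lemma aux_parity {ι : Type*} (x : ι → ℝ) (s : Finset ι)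
    (hx : ∀ i ∈ s, x i = 0 ∨ x i = 1/2 ∨ x i = 1) :
    ((∃ m : ℤ, ∑ i ∈ s, x i = (m:ℝ)) ∧ (∏ i ∈ s, (if x i = 1/2 then (-1:ℝ) else 1)) = 1) ∨
    ((∃ m : ℤ, ∑ i ∈ s, x i = (m:ℝ) + 1/2) ∧ (∏ i ∈ s, (if x i = 1/2 then (-1:ℝ) else 1)) = -1) := by
  classical
  induction s using Finset.induction with
  | empty => left; exact ⟨⟨0, by simp⟩, by simp⟩
  | @insert a s ha ih =>
      have hxa := hx a (Finset.mem_insert_self a s)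
      have ih' := ih (fun i hi => hx i (Finset.mem_insert_of_mem hi))
      rw [Finset.sum_insert ha, Finset.prod_insert ha]
      rcases hxa with h0 | hh | h1
      · rcases ih' with ⟨⟨m, hm⟩, hp⟩ | ⟨⟨m, hm⟩, hp⟩
        · left; exact ⟨⟨m, by rw [h0, hm]; ring⟩, by rw [hp]; norm_num [h0]⟩
        · right; exact ⟨⟨m, by rw [h0, hm]; ring⟩, by rw [hp]; norm_num [h0]⟩
      · rcases ih' with ⟨⟨m, hm⟩, hp⟩ | ⟨⟨m, hm⟩, hp⟩
        · right; exact ⟨⟨m, by rw [hh, hm]; ring⟩, by rw [hp]; norm_num [hh]⟩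
        · left
          refine ⟨⟨m + 1, by rw [hh, hm]; push_cast; ring⟩, by rw [hp]; norm_num [hh]⟩
      · rcases ih' with ⟨⟨m, hm⟩, hp⟩ | ⟨⟨m, hm⟩, hp⟩
        · left; exact ⟨⟨m + 1, by rw [h1, hm]; push_cast; ring⟩, by rw [hp]; norm_num [h1]⟩
        · right; exact ⟨⟨m + 1, by rw [h1, hm]; push_cast; ring⟩, by rw [hp]; norm_num [h1]⟩

lemma aux_int_bdd {Ω : Type*} [MeasureSpace Ω] [IsProbabilityMeasure (ℙ : Measure Ω)]
    (f : Ω → ℝ) (hm : Measurable f) (C : ℝ) (hb : ∀ᵐ ω ∂ℙ, |f ω| ≤ C) : Integrable f ℙ :=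
  Integrable.mono' (integrable_const C) hm.aestronglyMeasurable
    (by simpa [Real.norm_eq_abs] using hb)

lemma aux_single {Ω : Type*} [MeasureSpace Ω] [IsProbabilityMeasure (ℙ : Measure Ω)]
    (X : Ω → ℝ) (hm : Measurable X) (T W : ℝ)
    (hT : (ℙ {ω | X ω = 1/2}).toReal = T)
    (hW : (ℙ {ω | X ω = 1}).toReal = W)
    (hL : (ℙ {ω | X ω = 0}).toReal = 1 - T - W) :
    (∀ᵐ ω ∂ℙ, X ω = 0 ∨ X ω = 1/2 ∨ X ω = 1) := by
  have hm0 : MeasurableSet {ω | X ω = 0} := hm (measurableSet_singleton 0)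
  have hmh : MeasurableSet {ω | X ω = 1/2} := hm (measurableSet_singleton (1/2))
  have hm1 : MeasurableSet {ω | X ω = 1} := hm (measurableSet_singleton 1)
  have hd1 : Disjoint {ω | X ω = 1/2} {ω | X ω = 1} := by
    rw [Set.disjoint_left]; intro ω h1 h2
    simp only [Set.mem_setOf_eq] at h1 h2; rw [h1] at h2; norm_num at h2
  have hd2 : Disjoint {ω | X ω = 0} ({ω | X ω = 1/2} ∪ {ω | X ω = 1}) := by
    rw [Set.disjoint_left]; intro ω h1 h2
    simp only [Set.mem_setOf_eq, Set.mem_union] at h1 h2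
    rcases h2 with h2 | h2 <;> rw [h1] at h2 <;> norm_num at h2
  have hU : ℙ ({ω | X ω = 0} ∪ ({ω | X ω = 1/2} ∪ {ω | X ω = 1}))
      = ℙ {ω | X ω = 0} + (ℙ {ω | X ω = 1/2} + ℙ {ω | X ω = 1}) := by
    rw [measure_union hd2 (hmh.union hm1), measure_union hd1 hm1]
  have htr : (ℙ ({ω | X ω = 0} ∪ ({ω | X ω = 1/2} ∪ {ω | X ω = 1}))).toReal = 1 := by
    rw [hU, ENNReal.toReal_add (measure_ne_top _ _) (by finiteness),
      ENNReal.toReal_add (measure_ne_top _ _) (measure_ne_top _ _), hT, hW, hL]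
    ring
  have h1 : ℙ ({ω | X ω = 0} ∪ ({ω | X ω = 1/2} ∪ {ω | X ω = 1})) = 1 := by
    rw [← ENNReal.toReal_eq_one_iff, htr]
  have hc : ℙ ({ω | X ω = 0} ∪ ({ω | X ω = 1/2} ∪ {ω | X ω = 1}))ᶜ = 0 := by
    rw [prob_compl_eq_zero_iff (hm0.union (hmh.union hm1))]; exact h1
  rw [ae_iff]
  have hset : {a | ¬(X a = 0 ∨ X a = 1/2 ∨ X a = 1)}
      = ({ω | X ω = 0} ∪ ({ω | X ω = 1/2} ∪ {ω | X ω = 1}))ᶜ := by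
    ext ω
    simp only [Set.mem_setOf_eq, Set.mem_compl_iff, Set.mem_union]
  rw [hset]
  exact hc

lemma aux_two_ind {Ω : Type*} [MeasureSpace Ω] [IsProbabilityMeasure (ℙ : Measure Ω)]
    (X : Ω → ℝ) (hm : Measurable X) (c1 c2 : ℝ) :
    ∫ ω, (Set.indicator {ω | X ω = 1} (fun _ => c1) ω
        + Set.indicator {ω | X ω = 1/2} (fun _ => c2) ω) ∂ℙ
      = (ℙ {ω | X ω = 1}).toReal * c1 + (ℙ {ω | X ω = 1/2}).toReal * c2 := by
  have hmh : MeasurableSet {ω | X ω = 1/2} := hm (measurableSet_singleton (1/2))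
  have hm1 : MeasurableSet {ω | X ω = 1} := hm (measurableSet_singleton 1)
  rw [integral_add ((integrable_const c1).indicator hm1) ((integrable_const c2).indicator hmh),
    integral_indicator_const _ hm1, integral_indicator_const _ hmh]
  simp [smul_eq_mul, Measure.real]

lemma aux_sgn_integral {Ω : Type*} [MeasureSpace Ω] [IsProbabilityMeasure (ℙ : Measure Ω)]
    (X : Ω → ℝ) (hm : Measurable X) (T : ℝ) (hT : (ℙ {ω | X ω = 1/2}).toReal = T) :
    ∫ ω, (if X ω = 1/2 then (-1:ℝ) else 1) ∂ℙ = 1 - 2*T := by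
  have hmh : MeasurableSet {ω | X ω = 1/2} := hm (measurableSet_singleton (1/2))
  have hfeq : (fun ω => if X ω = 1/2 then (-1:ℝ) else 1)
      = fun ω => 1 - 2 * Set.indicator {ω | X ω = 1/2} (fun _ => (1:ℝ)) ω := by
    funext ω
    simp only [Set.indicator_apply, Set.mem_setOf_eq]
    by_cases h : X ω = 1/2
    · rw [if_pos h, if_pos h]; norm_num
    · rw [if_neg h, if_neg h]; norm_num
  rw [hfeq, integral_sub (integrable_const 1) (((integrable_const (1:ℝ)).indicator hmh).const_mul 2),
    integral_const, MeasureTheory.integral_const_mul, integral_indicator_const _ hmh]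
  simp only [Measure.real, measure_univ, ENNReal.toReal_one, smul_eq_mul, mul_one, one_mul, hT]

lemma aux_phi_integral {Ω : Type*} [MeasureSpace Ω] [IsProbabilityMeasure (ℙ : Measure Ω)]
    (X : Ω → ℝ) (hm : Measurable X) (T W : ℝ)
    (hT : (ℙ {ω | X ω = 1/2}).toReal = T) (hW : (ℙ {ω | X ω = 1}).toReal = W)
    (hgood : ∀ᵐ ω ∂ℙ, X ω = 0 ∨ X ω = 1/2 ∨ X ω = 1) :
    ∫ ω, X ω * (if X ω = 1/2 then (-1:ℝ) else 1) ∂ℙ = W - T/2 := by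
  have hcongr : (fun ω => X ω * (if X ω = 1/2 then (-1:ℝ) else 1))
      =ᵐ[ℙ] fun ω => (Set.indicator {ω | X ω = 1} (fun _ => (1:ℝ)) ω
        + Set.indicator {ω | X ω = 1/2} (fun _ => (-(1/2) : ℝ)) ω) := by
    filter_upwards [hgood] with ω hω
    rcases hω with h | h | h <;>
      simp [h, Set.indicator_apply, Set.mem_setOf_eq]
  rw [integral_congr_ae hcongr, aux_two_ind X hm 1 (-(1/2)), hT, hW]
  ring

lemma aux_X_integral {Ω : Type*} [MeasureSpace Ω] [IsProbabilityMeasure (ℙ : Measure Ω)]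
    (X : Ω → ℝ) (hm : Measurable X) (T W : ℝ)
    (hT : (ℙ {ω | X ω = 1/2}).toReal = T) (hW : (ℙ {ω | X ω = 1}).toReal = W)
    (hgood : ∀ᵐ ω ∂ℙ, X ω = 0 ∨ X ω = 1/2 ∨ X ω = 1) :
    ∫ ω, X ω ∂ℙ = W + T/2 := by
  have hcongr : (fun ω => X ω)
      =ᵐ[ℙ] fun ω => (Set.indicator {ω | X ω = 1} (fun _ => (1:ℝ)) ω
        + Set.indicator {ω | X ω = 1/2} (fun _ => ((1/2) : ℝ)) ω) := by
    filter_upwards [hgood] with ω hω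
    rcases hω with h | h | h <;>
      simp [h, Set.indicator_apply, Set.mem_setOf_eq]
  rw [integral_congr_ae hcongr, aux_two_ind X hm 1 (1/2), hT, hW]
  ring

lemma aux_key {n : ℕ} (t a b : Fin n → ℝ) (ht1 : ∀ i, |t i| ≤ 1)
    (hterm : ∀ j, |a j - b j * t j| ≤ (1 - t j^2)/4) :
    |(∑ j, a j * ∏ k ∈ univ.erase j, t k) - (∑ i, b i) * ∏ i, t i|
      ≤ (1 - |∏ i, t i|)/2 := by
  classical
  have hrw : (∑ j, a j * ∏ k ∈ univ.erase j, t k) - (∑ i, b i) * ∏ i, t i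
      = ∑ j, (∏ k ∈ univ.erase j, t k) * (a j - b j * t j) := by
    rw [Finset.sum_mul, ← Finset.sum_sub_distrib]
    refine Finset.sum_congr rfl fun j _ => ?_
    have hce : (∏ i, t i) = t j * ∏ k ∈ univ.erase j, t k :=
      (Finset.mul_prod_erase univ t (mem_univ j)).symm
    rw [hce]
    ring
  rw [hrw]
  calc |∑ j, (∏ k ∈ univ.erase j, t k) * (a j - b j * t j)|
      ≤ ∑ j, |(∏ k ∈ univ.erase j, t k) * (a j - b j * t j)| :=
        Finset.abs_sum_le_sum_abs _ _
    _ ≤ ∑ j, (∏ k ∈ univ.erase j, |t k|) * (1 - |t j|) * (1/2) := by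
        refine Finset.sum_le_sum fun j _ => ?_
        rw [abs_mul, Finset.abs_prod]
        have hP0 : (0:ℝ) ≤ ∏ k ∈ univ.erase j, |t k| :=
          Finset.prod_nonneg fun k _ => abs_nonneg _
        have h2 : |a j - b j * t j| ≤ (1 - |t j|) * (1/2) := by
          refine le_trans (hterm j) ?_
          have hu := ht1 j
          have h3 : (0:ℝ) ≤ 1 - |t j| := by linarith
          have h4 : (1 - |t j|) * |t j| ≤ (1 - |t j|) * 1 :=
            mul_le_mul_of_nonneg_left hu h3
          have h5 : |t j|^2 = t j^2 := sq_abs (t j)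
          nlinarith [h4, h5]
        calc (∏ k ∈ univ.erase j, |t k|) * |a j - b j * t j|
            ≤ (∏ k ∈ univ.erase j, |t k|) * ((1 - |t j|) * (1/2)) :=
              mul_le_mul_of_nonneg_left h2 hP0
          _ = (∏ k ∈ univ.erase j, |t k|) * (1 - |t j|) * (1/2) := by ring
    _ = (∑ j, (∏ k ∈ univ.erase j, |t k|) * (1 - |t j|)) * (1/2) :=
        (Finset.sum_mul _ _ _).symm
    _ ≤ (1 - ∏ k, |t k|) * (1/2) := by
        refine mul_le_mul_of_nonneg_right ?_ (by norm_num)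
        exact aux_telescope (fun i => |t i|) (fun i => abs_nonneg _) ht1 univ
    _ = (1 - |∏ i, t i|)/2 := by rw [Finset.abs_prod]; ring

/-- `|μ_even - μ| ≤ 1/2` and `|μ_odd - μ| ≤ 1/2`. -/
theorem poisson_trinomial_conditional_means_close_to_mean
    {Ω : Type*} [MeasureSpace Ω] [IsProbabilityMeasure (ℙ : Measure Ω)]
    {n : ℕ} (X : Fin n → Ω → ℝ) (T W : Fin n → ℝ)
    (hmeas : ∀ i, Measurable (X i))
    (hindep : iIndepFun X ℙ)
    (hT0 : ∀ i, 0 ≤ T i) (hW0 : ∀ i, 0 ≤ W i) (hTW1 : ∀ i, T i + W i ≤ 1)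
    (hT : ∀ i, (ℙ {ω | X i ω = 1/2}).toReal = T i)
    (hW : ∀ i, (ℙ {ω | X i ω = 1}).toReal = W i)
    (hL : ∀ i, (ℙ {ω | X i ω = 0}).toReal = 1 - T i - W i)
    (hposZ : 0 < (ℙ {ω | ∃ m : ℤ, (∑ i, X i ω) = (m : ℝ)}).toReal)
    (hposH : 0 < (ℙ {ω | ∃ m : ℤ, (∑ i, X i ω) = (m : ℝ) + 1/2}).toReal)
    (μ μeven μodd : ℝ)
    (hμ : μ = ∫ ω, ∑ i, X i ω ∂ℙ)
    (hμeven : μeven = (∫ ω in {ω | ∃ m : ℤ, (∑ i, X i ω) = (m : ℝ)}, ∑ i, X i ω ∂ℙ)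
        / (ℙ {ω | ∃ m : ℤ, (∑ i, X i ω) = (m : ℝ)}).toReal)
    (hμodd : μodd = (∫ ω in {ω | ∃ m : ℤ, (∑ i, X i ω) = (m : ℝ) + 1/2}, ∑ i, X i ω ∂ℙ)
        / (ℙ {ω | ∃ m : ℤ, (∑ i, X i ω) = (m : ℝ) + 1/2}).toReal) :
    |μeven - μ| ≤ 1/2 ∧ |μodd - μ| ≤ 1/2 := by
  classical
  -- abbreviations
  set t : Fin n → ℝ := fun i => 1 - 2 * T i with ht_def
  set a : Fin n → ℝ := fun i => W i - T i / 2 with ha_def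
  set b : Fin n → ℝ := fun i => W i + T i / 2 with hb_def
  set c : ℝ := ∏ i, t i with hc_def
  set d : ℝ := ∑ j, a j * ∏ k ∈ univ.erase j, t k with hd_def
  have hsgnm : Measurable sgnH := by
    unfold sgnH
    exact Measurable.ite (by simpa using measurableSet_singleton (1/2 : ℝ))
      measurable_const measurable_const
  have hphim : Measurable phiH := by unfold phiH; exact measurable_id.mul hsgnm
  have hgood1 : ∀ i, ∀ᵐ ω ∂ℙ, X i ω = 0 ∨ X i ω = 1/2 ∨ X i ω = 1 :=
    fun i => aux_single (X i) (hmeas i) (T i) (W i) (hT i) (hW i) (hL i)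
  have hgood : ∀ᵐ ω ∂ℙ, ∀ i, X i ω = 0 ∨ X i ω = 1/2 ∨ X i ω = 1 :=
    (ae_all_iff).2 hgood1
  -- the sign variables
  have hgmeas : ∀ i, Measurable (sgnH ∘ X i) := fun i => hsgnm.comp (hmeas i)
  have hgindep : iIndepFun (fun i => sgnH ∘ X i) ℙ :=
    hindep.comp (fun _ => sgnH) (fun _ => hsgnm)
  have hgint : ∀ i, Integrable (sgnH ∘ X i) ℙ := by
    intro i
    refine aux_int_bdd _ (hgmeas i) 1 (Filter.Eventually.of_forall fun ω => ?_)
    unfold sgnH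
    simp only [Function.comp_apply]
    split_ifs <;> norm_num
  obtain ⟨hGint, hGval⟩ := aux_integral_prod _ hgmeas hgindep hgint univ
  have hgval : ∀ i, ∫ ω, (sgnH ∘ X i) ω ∂ℙ = t i := by
    intro i
    rw [ht_def]
    exact aux_sgn_integral (X i) (hmeas i) (T i) (hT i)
  have hGval' : ∫ ω, (∏ i, sgnH ∘ X i) ω ∂ℙ = c := by
    rw [hGval, hc_def]
    exact Finset.prod_congr rfl fun i _ => hgval i
  -- pointwise value of the product of signs
  have hGpt : ∀ ω, (∏ i, sgnH ∘ X i) ω = ∏ i, (if X i ω = 1/2 then (-1:ℝ) else 1) := by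
    intro ω
    rw [Finset.prod_apply]
    exact Finset.prod_congr rfl fun i _ => rfl
  -- integrability of X i
  have hXint : ∀ i, Integrable (X i) ℙ := by
    intro i
    refine aux_int_bdd _ (hmeas i) 1 ?_
    filter_upwards [hgood1 i] with ω hω
    rcases hω with h | h | h <;> rw [h] <;> norm_num [abs_le]
  have hSint : Integrable (fun ω => ∑ i, X i ω) ℙ := by
    have := integrable_finset_sum (μ := ℙ) univ (fun i (_ : i ∈ univ) => hXint i)
    simpa using this
  have hSval : ∫ ω, ∑ i, X i ω ∂ℙ = ∑ i, b i := by
    rw [integral_finset_sum _ (fun i _ => hXint i)]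
    exact Finset.sum_congr rfl fun i _ =>
      aux_X_integral (X i) (hmeas i) (T i) (W i) (hT i) (hW i) (hgood1 i)
  -- for each j, the modified product
  have hXG : ∀ j : Fin n, Integrable (fun ω => X j ω * (∏ i, sgnH ∘ X i) ω) ℙ ∧
      ∫ ω, X j ω * (∏ i, sgnH ∘ X i) ω ∂ℙ = a j * ∏ k ∈ univ.erase j, t k := by
    intro j
    set fj : Fin n → Ω → ℝ := fun k => if k = j then phiH ∘ X k else sgnH ∘ X k with hfj_def
    have hfj_eq : (fun k => (if k = j then phiH else sgnH) ∘ X k) = fj := by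
      funext k; simp only [hfj_def]; split_ifs <;> rfl
    have hfjm : ∀ k, Measurable (fj k) := by
      intro k
      simp only [hfj_def]
      split_ifs
      exacts [hphim.comp (hmeas k), hsgnm.comp (hmeas k)]
    have hfjindep : iIndepFun fj ℙ := by
      rw [← hfj_eq]
      exact hindep.comp (fun k => if k = j then phiH else sgnH)
        (fun k => by
          show Measurable (if k = j then phiH else sgnH)
          split_ifs
          exacts [hphim, hsgnm])
    have hfjint : ∀ k, Integrable (fj k) ℙ := by
      intro k
      refine aux_int_bdd _ (hfjm k) 1 ?_
      filter_upwards [hgood1 k] with ω hω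
      simp only [hfj_def]
      split_ifs with h
      · simp only [Function.comp_apply]
        unfold phiH sgnH
        rcases hω with h' | h' | h' <;> rw [h'] <;> norm_num [abs_le]
      · simp only [Function.comp_apply]
        unfold sgnH
        split_ifs <;> norm_num [abs_le]
    obtain ⟨hpint, hpval⟩ := aux_integral_prod fj hfjm hfjindep hfjint univ
    have hpt : (fun ω => X j ω * (∏ i, sgnH ∘ X i) ω) = ∏ k, fj k := by
      funext ω
      rw [Finset.prod_apply, Finset.prod_apply,
        ← Finset.mul_prod_erase univ _ (mem_univ j),
        ← Finset.mul_prod_erase univ (fun k => fj k ω) (mem_univ j)]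
      have h1 : fj j ω = phiH (X j ω) := by simp [hfj_def]
      have h2 : ∀ k ∈ univ.erase j, fj k ω = (sgnH ∘ X k) ω := by
        intro k hk
        simp only [hfj_def]
        rw [if_neg (Finset.ne_of_mem_erase hk)]
      rw [h1, Finset.prod_congr rfl h2]
      unfold phiH
      simp only [Function.comp_apply]
      ring
    constructor
    · rw [hpt]; exact hpint
    · rw [hpt, hpval, ← Finset.mul_prod_erase univ _ (mem_univ j)]
      have h1 : ∫ ω, fj j ω ∂ℙ = a j := by
        have : fj j = fun ω => X j ω * (if X j ω = 1/2 then (-1:ℝ) else 1) := by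
          funext ω; simp only [hfj_def, eq_self_iff_true, if_true]; rfl
        rw [this, ha_def]
        exact aux_phi_integral (X j) (hmeas j) (T j) (W j) (hT j) (hW j) (hgood1 j)
      have h2 : ∀ k ∈ univ.erase j, ∫ ω, fj k ω ∂ℙ = t k := by
        intro k hk
        have : fj k = sgnH ∘ X k := by
          simp only [hfj_def]; rw [if_neg (Finset.ne_of_mem_erase hk)]
        rw [this]
        exact hgval k
      rw [h1, Finset.prod_congr rfl h2]
  -- S*G
  have hSGint : Integrable (fun ω => (∑ i, X i ω) * (∏ i, sgnH ∘ X i) ω) ℙ := by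
    have heq : (fun ω => (∑ i, X i ω) * (∏ i, sgnH ∘ X i) ω)
        = fun ω => ∑ j, X j ω * (∏ i, sgnH ∘ X i) ω := by
      funext ω; rw [Finset.sum_mul]
    rw [heq]
    exact integrable_finset_sum _ (fun j _ => (hXG j).1)
  have hSGval : ∫ ω, (∑ i, X i ω) * (∏ i, sgnH ∘ X i) ω ∂ℙ = d := by
    have heq : (fun ω => (∑ i, X i ω) * (∏ i, sgnH ∘ X i) ω)
        = fun ω => ∑ j, X j ω * (∏ i, sgnH ∘ X i) ω := by
      funext ω; rw [Finset.sum_mul]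
    rw [heq, integral_finset_sum _ (fun j _ => (hXG j).1), hd_def]
    exact Finset.sum_congr rfl fun j _ => (hXG j).2
  -- events
  set A : Set Ω := {ω | ∃ m : ℤ, (∑ i, X i ω) = (m : ℝ)} with hA_def
  set B : Set Ω := {ω | ∃ m : ℤ, (∑ i, X i ω) = (m : ℝ) + 1/2} with hB_def
  have hSmeas : Measurable (fun ω => ∑ i, X i ω) :=
    Finset.measurable_sum univ (fun i _ => hmeas i)
  have hAm : MeasurableSet A := by
    have he : A = (fun ω => ∑ i, X i ω) ⁻¹' {x : ℝ | ∃ m : ℤ, x = (m:ℝ)} := by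
      ext ω; simp [hA_def, Set.mem_preimage, Set.mem_setOf_eq]
    rw [he]
    refine hSmeas ?_
    have he2 : {x : ℝ | ∃ m : ℤ, x = (m:ℝ)} = Set.range (fun m : ℤ => (m:ℝ)) := by
      ext x; simp [Set.mem_range, eq_comm]
    rw [he2]
    exact (Set.countable_range _).measurableSet
  have hBm : MeasurableSet B := by
    have he : B = (fun ω => ∑ i, X i ω) ⁻¹' {x : ℝ | ∃ m : ℤ, x = (m:ℝ) + 1/2} := by
      ext ω; simp [hB_def, Set.mem_preimage, Set.mem_setOf_eq]
    rw [he]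
    refine hSmeas ?_
    have he2 : {x : ℝ | ∃ m : ℤ, x = (m:ℝ) + 1/2} = Set.range (fun m : ℤ => (m:ℝ) + 1/2) := by
      ext x; simp [Set.mem_range, eq_comm]
    rw [he2]
    exact (Set.countable_range _).measurableSet
  have hcase2 : ∀ᵐ ω ∂ℙ,
      ((ω ∈ A ∧ (∏ i, sgnH ∘ X i) ω = 1) ∨ (ω ∉ A ∧ ω ∈ B ∧ (∏ i, sgnH ∘ X i) ω = -1)) := by
    filter_upwards [hgood] with ω hω
    rcases aux_parity (fun i => X i ω) univ (fun i _ => hω i) with ⟨⟨m, hm⟩, hp⟩ | ⟨⟨m, hm⟩, hp⟩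
    · left
      constructor
      · show ∃ m : ℤ, (∑ i, X i ω) = (m : ℝ)
        exact ⟨m, hm⟩
      · rw [hGpt ω]; exact hp
    · right
      refine ⟨?_, ⟨m, hm⟩, ?_⟩
      · rintro ⟨m', hm'⟩
        exact aux_int_ne_half m' m (by rw [← hm', hm])
      · rw [hGpt ω]; exact hp
  have hPA : (ℙ A).toReal = (1 + c)/2 := by
    have h1 : (ℙ A).toReal = ∫ ω, Set.indicator A (fun _ => (1:ℝ)) ω ∂ℙ := by
      rw [integral_indicator_const _ hAm]; simp [Measure.real]
    have h2 : (fun ω => Set.indicator A (fun _ => (1:ℝ)) ω)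
        =ᵐ[ℙ] fun ω => (1 + (∏ i, sgnH ∘ X i) ω)/2 := by
      filter_upwards [hcase2] with ω hω
      rcases hω with ⟨hA1, hG1⟩ | ⟨hA1, _, hG1⟩
      · rw [Set.indicator_of_mem hA1, hG1]; norm_num
      · rw [Set.indicator_of_notMem hA1, hG1]; norm_num
    rw [h1, integral_congr_ae h2, integral_div,
      integral_add (integrable_const 1) hGint, integral_const, hGval']
    simp
  have hPB : (ℙ B).toReal = (1 - c)/2 := by
    have h1 : (ℙ B).toReal = ∫ ω, Set.indicator B (fun _ => (1:ℝ)) ω ∂ℙ := by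
      rw [integral_indicator_const _ hBm]; simp [Measure.real]
    have h2 : (fun ω => Set.indicator B (fun _ => (1:ℝ)) ω)
        =ᵐ[ℙ] fun ω => (1 - (∏ i, sgnH ∘ X i) ω)/2 := by
      filter_upwards [hcase2, hgood] with ω hω hg
      rcases hω with ⟨hA1, hG1⟩ | ⟨_, hB1, hG1⟩
      · have hnB : ω ∉ B := by
          rintro ⟨m', hm'⟩
          obtain ⟨m, hm⟩ : ∃ m : ℤ, (∑ i, X i ω) = (m : ℝ) := hA1
          exact aux_int_ne_half m m' (by rw [← hm, hm'])
        rw [Set.indicator_of_notMem hnB, hG1]; norm_num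
      · rw [Set.indicator_of_mem hB1, hG1]; norm_num
    rw [h1, integral_congr_ae h2, integral_div,
      integral_sub (integrable_const 1) hGint, integral_const, hGval']
    simp
  have hIA : ∫ ω in A, (∑ i, X i ω) ∂ℙ = ((∑ i, b i) + d)/2 := by
    rw [← integral_indicator hAm]
    have h2 : (fun ω => Set.indicator A (fun ω => ∑ i, X i ω) ω)
        =ᵐ[ℙ] fun ω => ((∑ i, X i ω) + (∑ i, X i ω) * (∏ i, sgnH ∘ X i) ω)/2 := by
      filter_upwards [hcase2] with ω hω
      rcases hω with ⟨hA1, hG1⟩ | ⟨hA1, _, hG1⟩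
      · rw [Set.indicator_of_mem hA1, hG1]; ring
      · rw [Set.indicator_of_notMem hA1, hG1]; ring
    rw [integral_congr_ae h2, integral_div, integral_add hSint hSGint, hSval, hSGval]
  have hIB : ∫ ω in B, (∑ i, X i ω) ∂ℙ = ((∑ i, b i) - d)/2 := by
    rw [← integral_indicator hBm]
    have h2 : (fun ω => Set.indicator B (fun ω => ∑ i, X i ω) ω)
        =ᵐ[ℙ] fun ω => ((∑ i, X i ω) - (∑ i, X i ω) * (∏ i, sgnH ∘ X i) ω)/2 := by
      filter_upwards [hcase2] with ω hω
      rcases hω with ⟨hA1, hG1⟩ | ⟨_, hB1, hG1⟩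
      · have hnB : ω ∉ B := by
          rintro ⟨m', hm'⟩
          obtain ⟨m, hm⟩ : ∃ m : ℤ, (∑ i, X i ω) = (m : ℝ) := hA1
          exact aux_int_ne_half m m' (by rw [← hm, hm'])
        rw [Set.indicator_of_notMem hnB, hG1]; ring
      · rw [Set.indicator_of_mem hB1, hG1]; ring
    rw [integral_congr_ae h2, integral_div, integral_sub hSint hSGint, hSval, hSGval]
  -- algebra
  have hmu : μ = ∑ i, b i := by rw [hμ, hSval]
  have hcpos : 0 < 1 + c := by rw [hPA] at hposZ; linarith
  have hcneg : 0 < 1 - c := by rw [hPB] at hposH; linarith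
  have ht1 : ∀ i, |t i| ≤ 1 := by
    intro i
    simp only [ht_def, abs_le]
    constructor <;> nlinarith [hT0 i, hW0 i, hTW1 i]
  have hterm : ∀ j, |a j - b j * t j| ≤ (1 - t j^2)/4 := by
    intro j
    simp only [ha_def, hb_def, ht_def, abs_le]
    constructor <;> nlinarith [hT0 j, hW0 j, hTW1 j]
  have hkey : |d - (∑ i, b i) * c| ≤ (1 - |c|)/2 := by
    rw [hd_def, hc_def]
    exact aux_key t a b ht1 hterm
  have hc_le : c ≤ |c| := le_abs_self c
  have hc_ge : -c ≤ |c| := neg_le_abs c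
  constructor
  · have heven : μeven - μ = (d - (∑ i, b i) * c)/(1 + c) := by
      rw [hμeven, hIA, hPA, hmu]
      field_simp
      ring
    rw [heven, abs_div, abs_of_pos hcpos, div_le_iff₀ hcpos]
    calc |d - (∑ i, b i) * c| ≤ (1 - |c|)/2 := hkey
      _ ≤ 1/2 * (1 + c) := by linarith
  · have hodd : μodd - μ = ((∑ i, b i) * c - d)/(1 - c) := by
      rw [hμodd, hIB, hPB, hmu]
      field_simp
      ring
    rw [hodd, abs_div, abs_of_pos hcneg, div_le_iff₀ hcneg]
    calc |(∑ i, b i) * c - d| = |d - (∑ i, b i) * c| := abs_sub_comm _ _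
      _ ≤ (1 - |c|)/2 := hkey
      _ ≤ 1/2 * (1 - c) := by linarith
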